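/- Assume (λ,λ̄,J,κ) is a pcf-case with witness f̄ = ⟨f_α : α < λ⟩, σ is a regular cardinal with κ < σ < lim inf_J(λ̄), and S ∈ Ǐ_σ[λ]. Then there is a club E of λ such that E ∩ S ⊆ S_gd[f̄,J], i.e. every δ ∈ E ∩ S is good (flat) for f̄. -/

import Mathlib

noncomputable section

open Cardinal Set Order

namespace PaperDefs

/-- `C` is a closed unbounded subset of the ordinal `δ`. -/
def IsClubIn (C : Set Ordinal) (δ : Ordinal.{0}) : Prop :=
  C ⊆ Set.Iio δ ∧
  (∀ α < δ, ∃ β ∈ C, α < β) ∧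
  (∀ α < δ, 0 < α → (∀ β < α, ∃ γ ∈ C, β < γ ∧ γ < α) → α ∈ C)

/-- `S` is a stationary subset of the ordinal `δ`. -/
def IsStationaryIn (S : Set Ordinal) (δ : Ordinal.{0}) : Prop :=
  ∀ C : Set Ordinal, IsClubIn C δ → (S ∩ C).Nonempty

/-- `S^λ_θ`, the set of ordinals below `λ` of cofinality `θ`. -/
def Scof (lam θ : Cardinal.{0}) : Set Ordinal :=
  {δ : Ordinal | δ < lam.ord ∧ δ.cof = θ}

/-- Membership in the ideal `Ǐ_θ[λ]`. -/
def InIcheck (θ lam : Cardinal.{0}) (S : Set Ordinal) : Prop :=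
  S ⊆ Scof lam θ ∧
  ∃ (a : Ordinal → Set Ordinal) (E : Set Ordinal),
    (∀ α : Ordinal, a α ⊆ Set.Iio α) ∧
    (∀ α : Ordinal, #(a α) < Cardinal.lift.{1} θ) ∧
    (∀ α β : Ordinal, β ∈ a α → a β = a α ∩ Set.Iio β) ∧
    IsClubIn E lam.ord ∧
    ∀ δ ∈ S ∩ E, ∃ e : Ordinal → Ordinal,
      StrictMonoOn e (Set.Iio θ.ord) ∧
      (∀ ε < θ.ord, e ε < δ) ∧
      (∀ β < δ, ∃ ε < θ.ord, β < e ε) ∧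
      (∀ ε < θ.ord, a (e ε) = e '' Set.Iio ε)

/-- The `γ`-th iterated cardinal successor `θ^{+γ}`. -/
def succIter (θ : Cardinal.{0}) (γ : Ordinal.{0}) : Cardinal.{0} :=
  Ordinal.limitRecOn γ θ (fun _ ih => Order.succ ih)
    (fun o _ ih => ⨆ i : (Set.Iio o), ih i.1 i.2)

/-- `J` is (the membership predicate of) a proper ideal on `ι` containing all singletons. -/
structure IsIdealOn {ι : Type*} (J : Set ι → Prop) : Prop where
  empty_mem : J ∅
  mono : ∀ {s t : Set ι}, s ⊆ t → J t → J s
  union_mem : ∀ {s t : Set ι}, J s → J t → J (s ∪ t)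
  singleton_mem : ∀ i : ι, J {i}
  proper : ¬ J Set.univ

/-- `f <_J g`. -/
def LtJ {ι : Type*} (J : Set ι → Prop) (f g : ι → Ordinal.{0}) : Prop :=
  J {i | ¬ f i < g i}

/-- The family `F` is `J`-free. -/
def FreeFam {ι : Type 1} (J : Set ι → Prop) (F : Set (ι → Ordinal.{0})) : Prop :=
  ∃ s : (ι → Ordinal.{0}) → Set ι,
    (∀ f ∈ F, J (s f)) ∧
    ∀ f₁ ∈ F, ∀ f₂ ∈ F, f₁ ≠ f₂ → ∀ i, i ∉ s f₁ → i ∉ s f₂ → f₁ i ≠ f₂ i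

/-- The family `F` is `(θ,J)`-free. -/
def FreeFamDeg {ι : Type 1} (J : Set ι → Prop) (θ : Cardinal.{0}) (F : Set (ι → Ordinal.{0})) : Prop :=
  ∀ F' ⊆ F, #F' < Cardinal.lift.{1} θ → FreeFam J F'

/-- The family `F` is `(θ₂,θ₁,J)`-free. -/
def FreeFamTwo {ι : Type 1} (J : Set ι → Prop) (θ₂ θ₁ : Cardinal.{0})
    (F : Set (ι → Ordinal.{0})) : Prop :=
  ∀ F' ⊆ F, #F' < Cardinal.lift.{1} θ₂ →
    ∃ (P : Set (Set (ι → Ordinal.{0}))) (s : (ι → Ordinal.{0}) → Set ι),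
      ⋃₀ P = F' ∧
      (∀ p ∈ P, ∀ q ∈ P, p ≠ q → Disjoint p q) ∧
      (∀ p ∈ P, #p < Cardinal.lift.{1} θ₁) ∧
      (∀ f ∈ F', J (s f)) ∧
      ∀ p₁ ∈ P, ∀ p₂ ∈ P, p₁ ≠ p₂ → ∀ f₁ ∈ p₁, ∀ f₂ ∈ p₂,
        ∀ i, i ∉ s f₁ → i ∉ s f₂ → f₁ i ≠ f₂ i

/-- `J` is a `θ`-complete ideal: closed under unions of fewer than `θ` members. -/
def IdealComplete {ι : Type*} (J : Set ι → Prop) (θ : Cardinal.{0}) : Prop :=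
  ∀ ε : Ordinal, ε < θ.ord → ∀ g : Ordinal → Set ι,
    (∀ i < ε, J (g i)) → J (⋃ i ∈ Set.Iio ε, g i)

/-- `comp(J) = sup {θ : J is θ-complete}`. -/
def IdealComp {ι : Type*} (J : Set ι → Prop) : Cardinal.{0} :=
  sSup {θ : Cardinal | IdealComplete J θ}

/-- The canonical index type of size `κ`: the ordinals below `κ`. -/
abbrev KIdx (κ : Cardinal.{0}) : Type 1 := (Set.Iio κ.ord : Set Ordinal)

/-- `f̄ = ⟨f_α : α < λ⟩` is a `<_J`-increasing `<_J`-cofinal sequence in `∏_i λ_i`. -/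
def IsPcfWitness {ι : Type 1} (J : Set ι → Prop) (lamb : ι → Cardinal.{0}) (lam : Cardinal.{0})
    (f : Ordinal.{0} → ι → Ordinal.{0}) : Prop :=
  (∀ α < lam.ord, ∀ i, f α i < (lamb i).ord) ∧
  (∀ α β : Ordinal, α < β → β < lam.ord → LtJ J (f α) (f β)) ∧
  ∀ g : ι → Ordinal.{0}, (∀ i, g i < (lamb i).ord) → ∃ α < lam.ord, LtJ J g (f α)

/-- `(λ,λ̄,J,κ)` is a pcf-case. -/
def IsPcfCase (κ : Cardinal.{0}) (J : Set (KIdx κ) → Prop) (lamb : KIdx κ → Cardinal.{0})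
    (lam : Cardinal.{0}) : Prop :=
  IsIdealOn J ∧ (∀ i, (lamb i).IsRegular ∧ κ < lamb i) ∧ lam.IsRegular ∧
    ∃ f : Ordinal → KIdx κ → Ordinal, IsPcfWitness J lamb lam f

/-- `μ = lim inf_J λ̄`: the least `χ` with `{i : λ_i < χ} ∉ J`. -/
def IsLimInfJ {ι : Type 1} (J : Set ι → Prop) (lamb : ι → Cardinal.{0}) (μ : Cardinal.{0}) : Prop :=
  ¬ J {i | lamb i < μ} ∧ ∀ χ : Cardinal, χ < μ → J {i | lamb i < χ}

/-- `𝒫̄` is a `(λ,μ,<λ)`-system. -/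
def IsSystem (lam μ : Cardinal.{0}) (P : Ordinal → Set (Set Ordinal)) : Prop :=
  (∀ α < lam.ord, ∀ a ∈ P α, a ⊆ Set.Iio α ∧ #a < Cardinal.lift.{1} μ) ∧
  (∀ α < lam.ord, ∀ a ∈ P α, ∀ β ∈ a, a ∩ Set.Iio β ∈ P β) ∧
  ∀ α < lam.ord, #(P α) < Cardinal.lift.{1} lam

/-- `f̄` obeys `(λ,λ̄,J,κ,𝒫̄)`. -/
def Obeys {ι : Type 1} (J : Set ι → Prop) (lamb : ι → Cardinal.{0}) (lam : Cardinal.{0})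
    (P : Ordinal → Set (Set Ordinal)) (f : Ordinal.{0} → ι → Ordinal.{0}) : Prop :=
  IsPcfWitness J lamb lam f ∧
  ∃ g : Set Ordinal → ι → Ordinal.{0},
    (∀ a b : Set Ordinal, (∃ α < lam.ord, a ∈ P α) → (∃ α < lam.ord, b ∈ P α) →
      (∃ γ : Ordinal, a = b ∩ Set.Iio γ) → a ≠ b →
      ∀ i, #(b : Set Ordinal) < Cardinal.lift.{1} (lamb i) → g a i < g b i) ∧
    (∀ α < lam.ord, ∀ a ∈ P α, LtJ J (g a) (f α)) ∧
    ∀ α < lam.ord, ∀ a ∈ P α, ∀ β ∈ a, ∀ i,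
      #(a : Set Ordinal) < Cardinal.lift.{1} (lamb i) → f β i < g a i

/-- `good''_θ(𝒫̄)`. -/
def GoodDblPrime (θ lam : Cardinal.{0}) (P : Ordinal → Set (Set Ordinal)) : Set Ordinal :=
  {δ : Ordinal | δ < lam.ord ∧ δ.cof = θ ∧ ∃ e : Ordinal → Ordinal,
    StrictMonoOn e (Set.Iio θ.ord) ∧ (∀ ε < θ.ord, e ε < δ) ∧
    (∀ β < δ, ∃ ε < θ.ord, β < e ε) ∧
    ∀ ε < θ.ord, (e '' Set.Iio ε) ∈ P (e ε)}

/-- `δ` is a good (flat) point of `f̄` with respect to `J`. -/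
def GoodPoint {ι : Type 1} (J : Set ι → Prop) (f : Ordinal.{0} → ι → Ordinal.{0})
    (δ : Ordinal.{0}) : Prop :=
  ∃ A : ι → Ordinal.{0} → Ordinal.{0},
    (∀ i, StrictMonoOn (A i) (Set.Iio δ.cof.ord)) ∧
    (∀ α < δ, ∃ ε < δ.cof.ord, LtJ J (f α) (fun i => A i ε)) ∧
    ∀ ε < δ.cof.ord, ∃ α < δ, LtJ J (fun i => A i ε) (f α)

/-- `g` is a `<_J`-exact upper bound of `f̄ ↾ δ`. -/
def IsEub {ι : Type 1} (J : Set ι → Prop) (f : Ordinal.{0} → ι → Ordinal.{0}) (δ : Ordinal.{0})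
    (g : ι → Ordinal.{0}) : Prop :=
  (∀ α < δ, LtJ J (f α) g) ∧ ∀ h : ι → Ordinal.{0}, LtJ J h g → ∃ α < δ, LtJ J h (f α)

/-- `δ` is a bad point: has an exact upper bound but is not good. -/
def BadPoint {ι : Type 1} (J : Set ι → Prop) (f : Ordinal.{0} → ι → Ordinal.{0})
    (δ : Ordinal.{0}) : Prop :=
  (∃ g : ι → Ordinal.{0}, IsEub J f δ g) ∧ ¬ GoodPoint J f δ

/-- `δ` is strongly chaotic for `f̄`. -/
def SchPoint {ι : Type 1} (J : Set ι → Prop) (κ : Cardinal.{0})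
    (f : Ordinal.{0} → ι → Ordinal.{0}) (δ : Ordinal.{0}) : Prop :=
  ∃ u : ι → Set Ordinal, (∀ i, #(u i) ≤ Cardinal.lift.{1} κ) ∧
    ∀ α < δ, ∃ g : ι → Ordinal.{0}, (∀ i, g i ∈ u i) ∧ ∃ β < δ, LtJ J (f α) g ∧ LtJ J g (f β)

/-- `min((u ∪ {∞}) ∖ γ)`: the least element of `u` that is `≥ γ`, or `∞`. -/
def minAbove (u : Set Ordinal.{0}) (γ : Ordinal.{0}) : WithTop Ordinal :=
  haveI := Classical.propDecidable (∃ β ∈ u, γ ≤ β)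
  if _ : ∃ β ∈ u, γ ≤ β then ((sInf {β | β ∈ u ∧ γ ≤ β} : Ordinal.{0}) : WithTop Ordinal) else ⊤

/-- `δ` is chaotic for `f̄`. -/
def ChPoint {ι : Type 1} (J : Set ι → Prop) (κ : Cardinal.{0})
    (f : Ordinal.{0} → ι → Ordinal.{0}) (δ : Ordinal.{0}) : Prop :=
  ∃ u : ι → Set Ordinal, (∀ i, #(u i) ≤ Cardinal.lift.{1} κ) ∧
    ∀ α < δ, ∃ β : Ordinal, α < β ∧ β < δ ∧
      ¬ J {i | minAbove (u i) (f α i) < minAbove (u i) (f β i)}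

/-- `f̄` is strongly-semi-`⟨θ,J⟩`-stable. -/
def StronglySemiStable {ι : Type 1} (J : Set ι → Prop) (θ : Cardinal.{0}) (lam : Ordinal.{0})
    (f : Ordinal.{0} → ι → Ordinal.{0}) : Prop :=
  ¬ ∃ (v u : Set Ordinal), v ⊆ Set.Iio lam ∧
    #v = Cardinal.lift.{1} θ ∧ #u < Cardinal.lift.{1} θ ∧
    ∀ α ∈ v, ∀ β ∈ v, α < β →
      ¬ J {i | ¬ minAbove u (f α i) ≤ minAbove u (f β i)}

/-- `f̄` is strongly-semi-`(θ₂,θ₁,J)`-stable. -/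
def StronglySemiStableRange {ι : Type 1} (J : Set ι → Prop) (θ₂ θ₁ : Cardinal.{0})
    (lam : Ordinal.{0}) (f : Ordinal.{0} → ι → Ordinal.{0}) : Prop :=
  ∀ θ : Cardinal, θ₁ ≤ θ → θ < θ₂ → StronglySemiStable J θ lam f

/-- `⟨f_α : α < α_*⟩` is a `(θ,J)`-free sequence. -/
def FreeSeq {ι : Type 1} (J : Set ι → Prop) (θ : Cardinal.{0})
    (f : Ordinal.{0} → ι → Ordinal.{0}) (αstar : Ordinal.{0}) : Prop :=
  ∀ u : Set Ordinal, u ⊆ Set.Iio αstar → #u < Cardinal.lift.{1} θ →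
    ∃ a : Ordinal → Set ι, (∀ α ∈ u, J (a α)) ∧
      ∀ α ∈ u, ∀ β ∈ u, α < β → ∀ i, i ∉ a α → i ∉ a β → f α i < f β i

end PaperDefs

namespace PaperDefs

-- ============ auxiliary lemmas ============

lemma lt_succ_self (x : Ordinal.{0}) : x < x + 1 := by
  rw [Ordinal.add_one_eq_succ]; exact Order.lt_succ x

lemma bddAbove_image_Iio (g : Ordinal.{0} → Ordinal.{0}) (ε : Ordinal.{0}) :
    BddAbove (g '' Set.Iio ε) :=
  ⟨Ordinal.bsup ε (fun ξ _ => g ξ), by rintro y ⟨x, hx, rfl⟩; exact Ordinal.le_bsup _ x hx⟩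

lemma sSup_image_Iio_lt_ord {c : Cardinal.{0}} (hc : c.IsRegular) {ε : Ordinal}
    (hε : ε.card < c) {g : Ordinal → Ordinal} (hg : ∀ ξ < ε, g ξ < c.ord) :
    sSup (g '' Set.Iio ε) < c.ord := by
  have h1 : sSup (g '' Set.Iio ε) ≤ Ordinal.bsup ε (fun ξ _ => g ξ) := by
    apply csSup_le'
    rintro y ⟨x, hx, rfl⟩
    exact Ordinal.le_bsup _ x hx
  exact h1.trans_lt (Cardinal.bsup_lt_ord_of_isRegular hc hε hg)

lemma sSup_add_one_Iio (ε : Ordinal.{0}) : sSup ((fun ξ => ξ + 1) '' Set.Iio ε) = ε := by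
  apply le_antisymm
  · apply csSup_le'
    rintro y ⟨x, hx, rfl⟩
    show x + 1 ≤ ε
    rw [Ordinal.add_one_eq_succ]
    exact Order.succ_le_of_lt hx
  · by_contra h
    push_neg at h
    have hmem : sSup ((fun ξ => ξ + 1) '' Set.Iio ε) + 1 ∈ (fun ξ => ξ + 1) '' Set.Iio ε :=
      ⟨_, h, rfl⟩
    have := le_csSup (bddAbove_image_Iio _ _) hmem
    exact absurd this (not_le.mpr (lt_succ_self _))

lemma sSup_le_sSup_subset {s t : Set Ordinal.{0}} (hb : BddAbove t) (h : s ⊆ t) :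
    sSup s ≤ sSup t := by
  rcases s.eq_empty_or_nonempty with rfl | hs
  · simp [csSup_empty, Ordinal.bot_eq_zero, zero_le]
  · exact csSup_le_csSup hb hs h


-- ============ the rank function rho ============

noncomputable def rho (a : Ordinal.{0} → Set Ordinal.{0}) (ha : ∀ b, a b ⊆ Set.Iio b) :
    Ordinal.{0} → Ordinal.{0} :=
  WellFounded.fix Ordinal.lt_wf
    (fun b rec => sSup (Set.range fun p : ↥(a b) => rec p.1 (ha b p.2) + 1))

lemma rho_eq (a : Ordinal.{0} → Set Ordinal.{0}) (ha : ∀ b, a b ⊆ Set.Iio b) (b : Ordinal) :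
    rho a ha b = sSup ((fun β => rho a ha β + 1) '' (a b)) := by
  unfold rho
  rw [WellFounded.fix_eq, Set.image_eq_range]

-- ============ GU / GT ============

noncomputable def GU {κ : Cardinal.{0}} (f : Ordinal.{0} → KIdx κ → Ordinal.{0})
    (g : Ordinal.{0} → Ordinal.{0}) (a : Ordinal.{0} → Set Ordinal.{0})
    (ha : ∀ b, a b ⊆ Set.Iio b) (b : Ordinal.{0}) (i : KIdx κ) : Ordinal.{0} :=
  sSup ((fun β => f (g β) i + 1) '' (a b)) + rho a ha b

noncomputable def GT {κ : Cardinal.{0}} (lamb : KIdx κ → Cardinal.{0})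
    (f : Ordinal.{0} → KIdx κ → Ordinal.{0}) (g : Ordinal.{0} → Ordinal.{0})
    (a : Ordinal.{0} → Set Ordinal.{0}) (ha : ∀ b, a b ⊆ Set.Iio b)
    (b : Ordinal.{0}) (i : KIdx κ) : Ordinal.{0} :=
  if GU f g a ha b i < (lamb i).ord then GU f g a ha b i else 0

lemma GU_congr {κ : Cardinal.{0}} (f : Ordinal.{0} → KIdx κ → Ordinal.{0})
    {g₁ g₂ : Ordinal.{0} → Ordinal.{0}} (a : Ordinal.{0} → Set Ordinal.{0})
    (ha : ∀ b, a b ⊆ Set.Iio b) (b : Ordinal.{0})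
    (hg : ∀ β ∈ a b, g₁ β = g₂ β) : GU f g₁ a ha b = GU f g₂ a ha b := by
  funext i
  unfold GU
  congr 2
  exact Set.image_congr (fun β hβ => by rw [hg β hβ])

lemma GT_congr {κ : Cardinal.{0}} (lamb : KIdx κ → Cardinal.{0})
    (f : Ordinal.{0} → KIdx κ → Ordinal.{0})
    {g₁ g₂ : Ordinal.{0} → Ordinal.{0}} (a : Ordinal.{0} → Set Ordinal.{0})
    (ha : ∀ b, a b ⊆ Set.Iio b) (b : Ordinal.{0})
    (hg : ∀ β ∈ a b, g₁ β = g₂ β) : GT lamb f g₁ a ha b = GT lamb f g₂ a ha b := by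
  funext i
  unfold GT
  rw [GU_congr f a ha b hg]

-- ============ the recursion gamF ============

noncomputable def gamFun {κ : Cardinal.{0}} (lam : Cardinal.{0}) (J : Set (KIdx κ) → Prop)
    (lamb : KIdx κ → Cardinal.{0}) (f : Ordinal.{0} → KIdx κ → Ordinal.{0})
    (a : Ordinal.{0} → Set Ordinal.{0}) (ha : ∀ b, a b ⊆ Set.Iio b)
    (b : Ordinal.{0}) (rec : ∀ b' < b, Ordinal.{0}) : Ordinal.{0} :=
  sInf {y | y < lam.ord ∧ (∀ b' (h : b' < b), rec b' h < y) ∧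
    LtJ J (GT lamb f (fun b' => if h : b' < b then rec b' h else 0) a ha b) (f y)}

noncomputable def gamF {κ : Cardinal.{0}} (lam : Cardinal.{0}) (J : Set (KIdx κ) → Prop)
    (lamb : KIdx κ → Cardinal.{0}) (f : Ordinal.{0} → KIdx κ → Ordinal.{0})
    (a : Ordinal.{0} → Set Ordinal.{0}) (ha : ∀ b, a b ⊆ Set.Iio b) :
    Ordinal.{0} → Ordinal.{0} :=
  WellFounded.fix Ordinal.lt_wf (gamFun lam J lamb f a ha)

lemma gamF_eq {κ : Cardinal.{0}} (lam : Cardinal.{0}) (J : Set (KIdx κ) → Prop)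
    (lamb : KIdx κ → Cardinal.{0}) (f : Ordinal.{0} → KIdx κ → Ordinal.{0})
    (a : Ordinal.{0} → Set Ordinal.{0}) (ha : ∀ b, a b ⊆ Set.Iio b) (b : Ordinal.{0}) :
    gamF lam J lamb f a ha b =
      sInf {y | y < lam.ord ∧ (∀ b' < b, gamF lam J lamb f a ha b' < y) ∧
        LtJ J (GT lamb f (gamF lam J lamb f a ha) a ha b) (f y)} := by
  have h0 : gamF lam J lamb f a ha b
      = gamFun lam J lamb f a ha b (fun b' _ => gamF lam J lamb f a ha b') :=
    WellFounded.fix_eq _ _ _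
  rw [h0]
  unfold gamFun
  have hGT : GT lamb f (fun b' => if h : b' < b then gamF lam J lamb f a ha b' else 0) a ha b
      = GT lamb f (gamF lam J lamb f a ha) a ha b :=
    GT_congr lamb f a ha b (fun β hβ => dif_pos (ha b hβ))
  rw [hGT]

theorem gamF_spec {κ lam : Cardinal.{0}} {J : Set (KIdx κ) → Prop}
    {lamb : KIdx κ → Cardinal.{0}} {f : Ordinal.{0} → KIdx κ → Ordinal.{0}}
    (hJ : IsIdealOn J) (hwit : IsPcfWitness J lamb lam f) (hlam : lam.IsRegular)
    (hlamb0 : ∀ i, ℵ₀ ≤ lamb i)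
    (a : Ordinal.{0} → Set Ordinal.{0}) (ha : ∀ b, a b ⊆ Set.Iio b) :
    ∀ b < lam.ord, gamF lam J lamb f a ha b < lam.ord ∧
      (∀ b' < b, gamF lam J lamb f a ha b' < gamF lam J lamb f a ha b) ∧
      LtJ J (GT lamb f (gamF lam J lamb f a ha) a ha b) (f (gamF lam J lamb f a ha b)) := by
  intro b
  induction b using Ordinal.induction with
  | _ b IH =>
  intro hb
  have hlim : Order.IsSuccLimit lam.ord := Cardinal.isSuccLimit_ord hlam.1
  set gam := gamF lam J lamb f a ha with hgamdef
  -- the truncated function is in the product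
  have hprod : ∀ i, GT lamb f gam a ha b i < (lamb i).ord := by
    intro i
    unfold GT
    split
    · assumption
    · exact Cardinal.lt_ord.mpr (by simpa using aleph0_pos.trans_le (hlamb0 i))
  obtain ⟨c, hc, hcLt⟩ := hwit.2.2 (GT lamb f gam a ha b) hprod
  have hS0 : sSup ((fun b' => gam b' + 1) '' Set.Iio b) < lam.ord := by
    apply sSup_image_Iio_lt_ord hlam (Cardinal.lt_ord.mp hb)
    intro ξ hξ
    have h1 : gam ξ < lam.ord := (IH ξ hξ (hξ.trans hb)).1
    rw [Ordinal.add_one_eq_succ]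
    exact hlim.succ_lt h1
  set y₀ := max (sSup ((fun b' => gam b' + 1) '' Set.Iio b)) (c + 1) with hy₀def
  have hcy₀ : c < y₀ := (lt_succ_self c).trans_le (le_max_right _ _)
  have hy₀lt : y₀ < lam.ord := by
    apply max_lt hS0
    rw [Ordinal.add_one_eq_succ]
    exact hlim.succ_lt hc
  have hy₀ : y₀ ∈ {y | y < lam.ord ∧ (∀ b' < b, gam b' < y) ∧
      LtJ J (GT lamb f gam a ha b) (f y)} := by
    refine ⟨hy₀lt, ?_, ?_⟩
    · intro b' hb'
      have h1 : gam b' + 1 ≤ sSup ((fun x => gam x + 1) '' Set.Iio b) :=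
        le_csSup (bddAbove_image_Iio _ _) ⟨b', hb', rfl⟩
      exact (lt_succ_self (gam b')).trans_le (h1.trans (le_max_left _ _))
    · -- LtJ via c
      have hstep := hwit.2.1 c y₀ hcy₀ hy₀lt
      apply hJ.mono _ (hJ.union_mem hcLt hstep)
      intro i hi
      rw [Set.mem_union]
      by_contra hcon
      push_neg at hcon
      simp only [Set.mem_setOf_eq] at hcon
      exact hi ((not_le.mp hcon.1).trans (not_le.mp hcon.2))
  have hmem := csInf_mem (Set.nonempty_of_mem hy₀)
  rw [← gamF_eq lam J lamb f a ha b] at hmem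
  exact hmem

theorem le_gamF {κ lam : Cardinal.{0}} {J : Set (KIdx κ) → Prop}
    {lamb : KIdx κ → Cardinal.{0}} {f : Ordinal.{0} → KIdx κ → Ordinal.{0}}
    (hJ : IsIdealOn J) (hwit : IsPcfWitness J lamb lam f) (hlam : lam.IsRegular)
    (hlamb0 : ∀ i, ℵ₀ ≤ lamb i)
    (a : Ordinal.{0} → Set Ordinal.{0}) (ha : ∀ b, a b ⊆ Set.Iio b) :
    ∀ b < lam.ord, b ≤ gamF lam J lamb f a ha b := by
  intro b
  induction b using Ordinal.induction with
  | _ b IH =>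
  intro hb
  by_contra h
  push_neg at h
  have h1 := IH _ h (h.trans hb)
  have h2 := (gamF_spec hJ hwit hlam hlamb0 a ha b hb).2.1 _ h
  exact absurd (h1.trans_lt h2) (lt_irrefl _)


-- ============ club lemmas ============

theorem isClubIn_closure {lam : Cardinal.{0}} (hlam : lam.IsRegular) (hw : ℵ₀ < lam)
    (g : Ordinal.{0} → Ordinal.{0}) (hg : ∀ b < lam.ord, g b < lam.ord) :
    IsClubIn {δ | δ < lam.ord ∧ ∀ b < δ, g b < δ} lam.ord := by
  have hlim : Order.IsSuccLimit lam.ord := Cardinal.isSuccLimit_ord hlam.1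
  refine ⟨fun δ hδ => hδ.1, ?_, ?_⟩
  · intro α hα
    set F : Ordinal → Ordinal :=
      fun x => max (x + 1) (sSup ((fun b => g b + 1) '' Set.Iio x)) with hF
    have hF1 : ∀ x < lam.ord, F x < lam.ord := by
      intro x hx
      apply max_lt
      · rw [Ordinal.add_one_eq_succ]; exact hlim.succ_lt hx
      · apply sSup_image_Iio_lt_ord hlam (Cardinal.lt_ord.mp hx)
        intro b hb
        rw [Ordinal.add_one_eq_succ]
        exact hlim.succ_lt (hg b (hb.trans hx))
    have hF2 : ∀ x, x < F x := fun x => (lt_succ_self x).trans_le (le_max_left _ _)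
    have hF3 : ∀ x, ∀ b < x, g b < F x := by
      intro x b hb
      have h1 : g b + 1 ≤ sSup ((fun b => g b + 1) '' Set.Iio x) :=
        le_csSup (bddAbove_image_Iio _ _) ⟨b, hb, rfl⟩
      exact (lt_succ_self (g b)).trans_le (h1.trans (le_max_right _ _))
    set d : ℕ → Ordinal := fun n => F^[n] (α + 1) with hd
    have hdsucc : ∀ n, d (n + 1) = F (d n) := fun n => Function.iterate_succ_apply' F n _
    have hdlt : ∀ n, d n < lam.ord := by
      intro n
      induction n with
      | zero =>
        show α + 1 < lam.ord
        rw [Ordinal.add_one_eq_succ]; exact hlim.succ_lt hα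
      | succ n ih => rw [hdsucc]; exact hF1 _ ih
    set β := ⨆ n, d n with hβdef
    have hβ : β < lam.ord := by
      apply Ordinal.iSup_lt_ord _ hdlt
      rw [Cardinal.mk_denumerable, hlam.cof_eq]
      exact hw
    have hdleβ : ∀ n, d n ≤ β := fun n => Ordinal.le_iSup d n
    refine ⟨β, ⟨hβ, ?_⟩, ?_⟩
    · intro b hbβ
      have hex : ∃ n, b < d n := by
        by_contra hcon
        push_neg at hcon
        exact absurd (ciSup_le' hcon) (not_le.mpr hbβ)
      obtain ⟨n, hn⟩ := hex
      calc g b < F (d n) := hF3 _ _ hn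
        _ = d (n + 1) := (hdsucc n).symm
        _ ≤ β := hdleβ _
    · calc α < α + 1 := lt_succ_self α
        _ = d 0 := rfl
        _ ≤ β := hdleβ 0
  · intro α hα h0 hcl
    refine ⟨hα, fun b hb => ?_⟩
    obtain ⟨γ, hγ, h1, h2⟩ := hcl b hb
    exact (hγ.2 b h1).trans h2

theorem isClubIn_inter {o : Ordinal.{0}} (hcof : ℵ₀ < o.cof) {C₁ C₂ : Set Ordinal}
    (h₁ : IsClubIn C₁ o) (h₂ : IsClubIn C₂ o) : IsClubIn (C₁ ∩ C₂) o := by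
  refine ⟨fun x hx => h₁.1 hx.1, ?_, ?_⟩
  · intro α hα
    have key : ∀ x : Ordinal, x < o →
        ∃ z, z < o ∧ x < z ∧ z ∈ C₂ ∧ ∃ c1 ∈ C₁, x < c1 ∧ c1 < z := by
      intro x hx
      obtain ⟨c1, hc1, hxc1⟩ := h₁.2.1 x hx
      obtain ⟨c2, hc2, h12⟩ := h₂.2.1 c1 (h₁.1 hc1)
      exact ⟨c2, h₂.1 hc2, hxc1.trans h12, hc2, c1, hc1, hxc1, h12⟩
    set T := {x : Ordinal // x < o} with hT
    set step : T → T := fun x => ⟨(key x.1 x.2).choose, ((key x.1 x.2).choose_spec).1⟩ with hstepdef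
    have hstep : ∀ x : T, x.1 < (step x).1 ∧ (step x).1 ∈ C₂ ∧
        ∃ c1 ∈ C₁, x.1 < c1 ∧ c1 < (step x).1 :=
      fun x => ⟨(key x.1 x.2).choose_spec.2.1, (key x.1 x.2).choose_spec.2.2.1,
        (key x.1 x.2).choose_spec.2.2.2⟩
    set d : ℕ → T := fun n => step^[n] ⟨α, hα⟩ with hd
    have hdsucc : ∀ n, d (n + 1) = step (d n) := fun n => Function.iterate_succ_apply' step n _
    set β := ⨆ n, (d n).1 with hβdef
    have hβ : β < o := by
      apply Ordinal.iSup_lt_ord _ (fun n => (d n).2)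
      rwa [Cardinal.mk_denumerable]
    have hdleβ : ∀ n, (d n).1 ≤ β := fun n => Ordinal.le_iSup (fun n => (d n).1) n
    have hmono : ∀ n, (d n).1 < (d (n + 1)).1 := by
      intro n; rw [hdsucc]; exact (hstep (d n)).1
    have hαβ : α < β := lt_of_lt_of_le (by exact hmono 0) (hdleβ 1)
    have h0β : 0 < β := (zero_le : (0 : Ordinal) ≤ α).trans_lt hαβ
    have hex : ∀ x < β, ∃ n, x < (d n).1 := by
      intro x hx
      by_contra hcon
      push_neg at hcon
      exact absurd (ciSup_le' hcon) (not_le.mpr hx)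
    refine ⟨β, ⟨?_, ?_⟩, hαβ⟩
    · apply h₁.2.2 β hβ h0β
      intro x hx
      obtain ⟨n, hn⟩ := hex x hx
      obtain ⟨c1, hc1, hn1, hn2⟩ := (hstep (d n)).2.2
      refine ⟨c1, hc1, hn.trans hn1, ?_⟩
      calc c1 < (step (d n)).1 := hn2
        _ = (d (n + 1)).1 := by rw [hdsucc]
        _ ≤ β := hdleβ _
      -- strict: c1 < d (n+1) ≤ β gives c1 < β -- done via lt_of_lt_of_le in calc
    · apply h₂.2.2 β hβ h0β
      intro x hx
      obtain ⟨n, hn⟩ := hex x hx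
      refine ⟨(d (n + 1)).1, by rw [hdsucc]; exact (hstep (d n)).2.1, hn.trans (hmono n), ?_⟩
      exact lt_of_lt_of_le (hmono (n + 1)) (hdleβ (n + 2))
  · intro α hα h0 hcl
    constructor
    · apply h₁.2.2 α hα h0
      intro b hb
      obtain ⟨γ, hγ, hh⟩ := hcl b hb
      exact ⟨γ, hγ.1, hh⟩
    · apply h₂.2.2 α hα h0
      intro b hb
      obtain ⟨γ, hγ, hh⟩ := hcl b hb
      exact ⟨γ, hγ.2, hh⟩


/-- for a pcf-case witness `f̄` and `S ∈ Ǐ_σ[λ]` with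
`κ < σ < lim inf_J(λ̄)`, there is a club `E` of `λ` with `E ∩ S ⊆ S_gd[f̄,J]`. -/
theorem statement19 (κ sigma lam μ : Cardinal.{0}) (J : Set (KIdx κ) → Prop)
    (lamb : KIdx κ → Cardinal.{0}) (f : Ordinal → KIdx κ → Ordinal)
    (hJ : IsIdealOn J) (hlamb : ∀ i, (lamb i).IsRegular ∧ κ < lamb i)
    (hlam : lam.IsRegular) (hwit : IsPcfWitness J lamb lam f)
    (hsigma : sigma.IsRegular) (hκσ : κ < sigma) (hσμ : sigma < μ)
    (hμ : IsLimInfJ J lamb μ)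
    (S : Set Ordinal) (hS : InIcheck sigma lam S) :
    ∃ E : Set Ordinal, IsClubIn E lam.ord ∧ ∀ δ ∈ E ∩ S, GoodPoint J f δ := by
  obtain ⟨hsub, a, E₁, ha, hacard, hacoh, hE₁, hprop⟩ := hS
  by_cases hw : ℵ₀ < lam
  case neg =>
    have hlim := Cardinal.isSuccLimit_ord hlam.1
    refine ⟨Set.Iio lam.ord, ⟨fun x hx => hx, fun α hα => ⟨α + 1, ?_, lt_succ_self α⟩,
      fun α hα _ _ => hα⟩, ?_⟩
    · show α + 1 ∈ Set.Iio lam.ord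
      rw [Set.mem_Iio, Ordinal.add_one_eq_succ]
      exact hlim.succ_lt hα
    · rintro δ ⟨hδE, hδS⟩
      exfalso
      have h1 : δ.cof = sigma := (hsub hδS).2
      have h2 : δ.card < lam := Cardinal.lt_ord.mp (hsub hδS).1
      have h3 : δ.cof ≤ δ.card := Ordinal.cof_le_card δ
      have h4 : sigma < ℵ₀ := lt_of_le_of_lt (h1 ▸ h3) (h2.trans_le (not_lt.mp hw))
      exact absurd hsigma.1 (not_le.mpr h4)
  case pos =>
    have hlamb0 : ∀ i, ℵ₀ ≤ lamb i := fun i => (hlamb i).1.1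
    set gam := gamF lam J lamb f a ha with hgamdef
    have hspec := gamF_spec hJ hwit hlam hlamb0 a ha
    have hlegam := le_gamF hJ hwit hlam hlamb0 a ha
    have hE₂ : IsClubIn {δ | δ < lam.ord ∧ ∀ b < δ, gam b < δ} lam.ord :=
      isClubIn_closure hlam hw gam (fun b hb => (hspec b hb).1)
    have hcof : ℵ₀ < lam.ord.cof := by rw [hlam.cof_eq]; exact hw
    refine ⟨E₁ ∩ {δ | δ < lam.ord ∧ ∀ b < δ, gam b < δ},
      isClubIn_inter hcof hE₁ hE₂, ?_⟩
    rintro δ ⟨⟨hδE₁, hδE₂⟩, hδS⟩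
    have hδlam : δ < lam.ord := (hsub hδS).1
    have hδcof : δ.cof = sigma := (hsub hδS).2
    obtain ⟨e, he1, he2, he3, he4⟩ := hprop δ ⟨hδS, hδE₁⟩
    have hσlim : Order.IsSuccLimit sigma.ord := Cardinal.isSuccLimit_ord hsigma.1
    have hrho : ∀ ε < sigma.ord, rho a ha (e ε) = ε := by
      intro ε
      induction ε using Ordinal.induction with
      | _ ε IH =>
      intro hε
      rw [rho_eq, he4 ε hε, Set.image_image]
      have himg : (fun ξ => rho a ha (e ξ) + 1) '' Set.Iio ε = (fun ξ => ξ + 1) '' Set.Iio ε :=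
        Set.image_congr (fun ξ hξ => by rw [IH ξ hξ (lt_trans hξ hε)])
      rw [himg, sSup_add_one_Iio]
    have hGU : ∀ ε < sigma.ord, ∀ i, GU f gam a ha (e ε) i
        = sSup ((fun ξ => f (gam (e ξ)) i + 1) '' Set.Iio ε) + ε := by
      intro ε hε i
      unfold GU
      rw [he4 ε hε, Set.image_image, hrho ε hε]
    have hT : J {i | lamb i < sigma} := hμ.2 sigma hσμ
    refine ⟨fun i ε => GU f gam a ha (e ε) i, ?_, ?_, ?_⟩
    · -- strict monotonicity
      intro i ε hε ε' hε' hlt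
      rw [Set.mem_Iio, hδcof] at hε hε'
      show GU f gam a ha (e ε) i < GU f gam a ha (e ε') i
      rw [hGU ε hε i, hGU ε' hε' i]
      have hsub2 : (fun ξ => f (gam (e ξ)) i + 1) '' Set.Iio ε
          ⊆ (fun ξ => f (gam (e ξ)) i + 1) '' Set.Iio ε' :=
        Set.image_mono (Set.Iio_subset_Iio hlt.le)
      have hs := sSup_le_sSup_subset (bddAbove_image_Iio _ _) hsub2
      calc sSup ((fun ξ => f (gam (e ξ)) i + 1) '' Set.Iio ε) + ε
          ≤ sSup ((fun ξ => f (gam (e ξ)) i + 1) '' Set.Iio ε') + ε :=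
            add_le_add_left hs ε
        _ < sSup ((fun ξ => f (gam (e ξ)) i + 1) '' Set.Iio ε') + ε' :=
            add_lt_add_right hlt _
    · -- every f_α is below some level
      intro α hα
      obtain ⟨ξ₀, hξ₀, hαξ₀⟩ := he3 α hα
      have hξ₀1 : ξ₀ + 1 < sigma.ord := by
        rw [Ordinal.add_one_eq_succ]; exact hσlim.succ_lt hξ₀
      refine ⟨ξ₀ + 1, by rw [hδcof]; exact hξ₀1, ?_⟩
      have heb : e ξ₀ < lam.ord := (he2 ξ₀ hξ₀).trans hδlam
      have hαg : α < gam (e ξ₀) := hαξ₀.trans_le (hlegam _ heb)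
      have hglt : gam (e ξ₀) < lam.ord := (hspec _ heb).1
      have hLt := hwit.2.1 α (gam (e ξ₀)) hαg hglt
      apply hJ.mono _ hLt
      intro i hi
      simp only [Set.mem_setOf_eq] at hi ⊢
      intro hlt2
      apply hi
      show f α i < GU f gam a ha (e (ξ₀ + 1)) i
      rw [hGU _ hξ₀1 i]
      have hmem : f (gam (e ξ₀)) i + 1 ∈ (fun ξ => f (gam (e ξ)) i + 1) '' Set.Iio (ξ₀ + 1) :=
        ⟨ξ₀, lt_succ_self ξ₀, rfl⟩
      have h1 : f (gam (e ξ₀)) i + 1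
          ≤ sSup ((fun ξ => f (gam (e ξ)) i + 1) '' Set.Iio (ξ₀ + 1)) :=
        le_csSup (bddAbove_image_Iio _ _) hmem
      have h2 : f α i < f (gam (e ξ₀)) i + 1 := hlt2.trans (lt_succ_self _)
      exact lt_of_lt_of_le (h2.trans_le h1) le_self_add
    · -- every level is below some f_α
      intro ε hε
      rw [hδcof] at hε
      have heb : e ε < lam.ord := (he2 ε hε).trans hδlam
      refine ⟨gam (e ε), hδE₂.2 (e ε) (he2 ε hε), ?_⟩
      have hspec3 := (hspec (e ε) heb).2.2
      apply hJ.mono _ (hJ.union_mem hT hspec3)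
      intro i hi
      simp only [Set.mem_setOf_eq] at hi
      rw [Set.mem_union]
      by_contra hcon
      push_neg at hcon
      simp only [Set.mem_setOf_eq] at hcon
      obtain ⟨h1, h2⟩ := hcon
      apply hi
      have hσi : sigma ≤ lamb i := not_lt.mp h1
      have hilim : Order.IsSuccLimit (lamb i).ord := Cardinal.isSuccLimit_ord (hlamb0 i)
      have hsup : sSup ((fun ξ => f (gam (e ξ)) i + 1) '' Set.Iio ε) < (lamb i).ord := by
        apply sSup_image_Iio_lt_ord (hlamb i).1 ((Cardinal.lt_ord.mp hε).trans_le hσi)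
        intro ξ hξ
        have hgb : gam (e ξ) < lam.ord := (hspec (e ξ) ((he2 ξ (hξ.trans hε)).trans hδlam)).1
        have hfb := hwit.1 _ hgb i
        rw [Ordinal.add_one_eq_succ]
        exact hilim.succ_lt hfb
      have hεi : ε < (lamb i).ord := hε.trans_le (Cardinal.ord_le_ord.mpr hσi)
      have hGUlt : GU f gam a ha (e ε) i < (lamb i).ord := by
        rw [hGU ε hε i, Cardinal.lt_ord, Ordinal.card_add]
        exact Cardinal.add_lt_of_lt (hlamb0 i) (Cardinal.lt_ord.mp hsup) (Cardinal.lt_ord.mp hεi)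
      have hGTeq : GT lamb f gam a ha (e ε) i = GU f gam a ha (e ε) i := if_pos hGUlt
      show GU f gam a ha (e ε) i < f (gam (e ε)) i
      rw [← hGTeq]
      exact not_le.mp h2

end PaperDefs
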